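/- Let H be the differential entropy set function of a multivariate Gaussian with positive definite covariance κ: H(S) = ½ ln((2πe)^{|S|} det κ(S,S)). Then H is submodular on subsets of {1,…,n}. -/

import Mathlib

open Matrix Finset

-- PosDef submatrix for injective map
lemma posdef_submatrix_inj {m N : Type*} [Fintype m] [Fintype N] [DecidableEq N]
    {M : Matrix N N ℝ} (hM : M.PosDef) (e : m → N) (he : Function.Injective e) :
    (M.submatrix e e).PosDef := by
  refine Matrix.PosDef.of_dotProduct_mulVec_pos ?_ ?_
  · exact hM.isHermitian.submatrix e
  · intro x hx
    classical
    set y : N → ℝ := fun j => if h : ∃ s, e s = j then x h.choose else 0 with hy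
    have hye : ∀ s, y (e s) = x s := by
      intro s
      have h : ∃ s', e s' = e s := ⟨s, rfl⟩
      simp only [hy, dif_pos h]
      have := h.choose_spec
      rw [he this]
    have hy0 : y ≠ 0 := by
      intro h0
      apply hx
      funext s
      have := congrFun h0 (e s)
      rw [hye s] at this
      simpa using this
    have key : dotProduct (star x) ((M.submatrix e e).mulVec x) = dotProduct (star y) (M.mulVec y) := by
      have hsum : ∀ g : N → ℝ, (∀ j, (¬ ∃ s, e s = j) → g j = 0) →
          ∑ j, g j = ∑ s, g (e s) := by
        intro g hg
        rw [← Finset.sum_image (f := g) (g := e) (by intro a _ b _ h; exact he h)]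
        refine (Finset.sum_subset (Finset.subset_univ _) ?_).symm
        intro j _ hj
        apply hg
        rintro ⟨s, rfl⟩
        exact hj (Finset.mem_image.2 ⟨s, Finset.mem_univ _, rfl⟩)
      simp only [dotProduct, Matrix.mulVec, Matrix.submatrix_apply, Pi.star_apply,
        star_trivial]
      rw [hsum (fun j => y j * ∑ k, M j k * y k) ?_]
      · refine Finset.sum_congr rfl fun s _ => ?_
        rw [hye]
        congr 1
        rw [hsum (fun k => M (e s) k * y k) ?_]
        · exact Finset.sum_congr rfl fun t _ => by rw [hye]
        · intro j hj
          simp only [hy, dif_neg hj, mul_zero]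
      · intro j hj
        simp only [hy, dif_neg hj, zero_mul]
    rw [key]
    exact hM.dotProduct_mulVec_pos hy0


variable {n : ℕ}

noncomputable def subA (κ : Matrix (Fin n) (Fin n) ℝ) (T : Finset (Fin n)) : Matrix T T ℝ :=
  κ.submatrix (fun a : T => (a : Fin n)) (fun a : T => (a : Fin n))

noncomputable def qf (κ : Matrix (Fin n) (Fin n) ℝ) (i : Fin n) (T : Finset (Fin n)) : ℝ :=
  dotProduct (fun t : T => κ t i) ((subA κ T)⁻¹.mulVec (fun t : T => κ t i))

def insEquiv (i : Fin n) (T : Finset (Fin n)) (h : i ∉ T) :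
    (T ⊕ Unit) ≃ (insert i T : Finset (Fin n)) where
  toFun := Sum.elim (fun s => ⟨s, Finset.mem_insert_of_mem s.2⟩)
    (fun _ => ⟨i, Finset.mem_insert_self i T⟩)
  invFun x := if hx : (x : Fin n) ∈ T then Sum.inl ⟨x, hx⟩ else Sum.inr ()
  left_inv := by
    rintro (s | u)
    · simp
    · simp [h]
  right_inv := by
    rintro ⟨x, hx⟩
    rcases Finset.mem_insert.1 hx with rfl | hxT
    · simp [h]
    · simp [hxT]

lemma det_insert (κ : Matrix (Fin n) (Fin n) ℝ) (hκ : κ.PosDef) (i : Fin n)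
    (T : Finset (Fin n)) (hiT : i ∉ T) :
    (subA κ (insert i T)).det = (subA κ T).det * (κ i i - qf κ i T) := by
  classical
  have hAT : (subA κ T).PosDef := posdef_submatrix_inj hκ _ Subtype.coe_injective
  haveI : Invertible (subA κ T) := hAT.isUnit.invertible
  set B : Matrix T Unit ℝ := fun s _ => κ s i with hB
  set C : Matrix Unit T ℝ := fun _ t => κ i t with hC
  set D : Matrix Unit Unit ℝ := fun _ _ => κ i i with hD
  have hblock : (subA κ (insert i T)).submatrix (insEquiv i T hiT) (insEquiv i T hiT)
      = Matrix.fromBlocks (subA κ T) B C D := by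
    ext a b
    rcases a with s | u <;> rcases b with t | u <;> rfl
  have hdet : (subA κ (insert i T)).det = (Matrix.fromBlocks (subA κ T) B C D).det := by
    rw [← hblock, Matrix.det_submatrix_equiv_self]
  rw [hdet, Matrix.det_fromBlocks₁₁]
  congr 1
  rw [Matrix.det_unique]
  have : (D - C * ⅟(subA κ T) * B) default default
      = κ i i - (C * (subA κ T)⁻¹ * B) default default := by
    rw [Matrix.invOf_eq_nonsing_inv]
    rfl
  rw [this]
  congr 1
  -- (C * (subA κ T)⁻¹ * B) default default = qf κ i T
  have hsym : ∀ s : T, κ i s = κ s i := by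
    intro s
    have := hκ.isHermitian.apply (s : Fin n) i
    simpa using this
  simp only [Matrix.mul_apply, qf, dotProduct, Matrix.mulVec, hB, hC]
  simp only [Finset.sum_mul, Finset.mul_sum]
  rw [Finset.sum_comm]
  refine Finset.sum_congr rfl fun s _ => ?_
  beta_reduce
  erw [Matrix.mul_apply, Finset.sum_mul]
  refine Finset.sum_congr rfl fun t _ => ?_
  rw [hsym]
  ring

lemma qf_mono (κ : Matrix (Fin n) (Fin n) ℝ) (hκ : κ.PosDef) (i : Fin n)
    (S S' : Finset (Fin n)) (hSS : S ⊆ S') : qf κ i S ≤ qf κ i S' := by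
  classical
  have hAS : (subA κ S).PosDef := posdef_submatrix_inj hκ _ Subtype.coe_injective
  have hAS' : (subA κ S').PosDef := posdef_submatrix_inj hκ _ Subtype.coe_injective
  have hκsym : ∀ a b : Fin n, κ a b = κ b a := by
    intro a b
    have := hκ.isHermitian.apply b a
    simpa using this
  have hsymm : ∀ (x z : S' → ℝ),
      dotProduct x ((subA κ S').mulVec z)
        = dotProduct z ((subA κ S').mulVec x) := by
    intro x z
    simp only [dotProduct, Matrix.mulVec, Finset.mul_sum]
    rw [Finset.sum_comm]
    refine Finset.sum_congr rfl fun a _ => Finset.sum_congr rfl fun b _ => ?_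
    rw [show (subA κ S') b a = (subA κ S') a b from hκsym _ _]
    ring
  set v : S → ℝ := fun s => κ s i with hv
  set w : S' → ℝ := fun t => κ t i with hw
  set u : S → ℝ := (subA κ S)⁻¹.mulVec v with hu
  set p : S' → ℝ := (subA κ S')⁻¹.mulVec w with hp
  have hqS : qf κ i S = dotProduct v u := rfl
  have hqS' : qf κ i S' = dotProduct w p := rfl
  have hASu : (subA κ S).mulVec u = v := by
    rw [hu, Matrix.mulVec_mulVec, Matrix.mul_nonsing_inv _ hAS.det_pos.ne'.isUnit, Matrix.one_mulVec]
  have hASp : (subA κ S').mulVec p = w := by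
    rw [hp, Matrix.mulVec_mulVec, Matrix.mul_nonsing_inv _ hAS'.det_pos.ne'.isUnit, Matrix.one_mulVec]
  -- variational upper bound
  have hub : ∀ z : S' → ℝ,
      2 * dotProduct z w - dotProduct z ((subA κ S').mulVec z) ≤ qf κ i S' := by
    intro z
    have h0 : 0 ≤ dotProduct (z - p) ((subA κ S').mulVec (z - p)) := by
      have := hAS'.posSemidef.dotProduct_mulVec_nonneg (z - p)
      simpa using this
    have h1 : dotProduct z ((subA κ S').mulVec p) = dotProduct z w := by
      rw [hASp]
    have h2 : dotProduct p ((subA κ S').mulVec z) = dotProduct z w := by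
      rw [hsymm p z, h1]
    have h3 : dotProduct p ((subA κ S').mulVec p) = qf κ i S' := by
      rw [hASp, hqS', dotProduct_comm]
    rw [Matrix.mulVec_sub, dotProduct_sub, sub_dotProduct,
      sub_dotProduct] at h0
    linarith
  -- extension of u by zero
  set Y : Fin n → ℝ := fun x => if h : x ∈ S then u ⟨x, h⟩ else 0 with hY
  set y : S' → ℝ := fun t => Y t with hy
  have hYS : ∀ s : S, Y s = u s := by
    intro s
    simp only [hY, dif_pos s.2]
  have hY0 : ∀ x : Fin n, x ∉ S → Y x = 0 := by
    intro x hx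
    simp only [hY, dif_neg hx]
  have key1 : dotProduct y w = dotProduct u v := by
    simp only [dotProduct, hy, hw, hv]
    rw [Finset.sum_coe_sort S' (fun x => Y x * κ x i),
      ← Finset.sum_subset hSS (fun x _ hx => by rw [hY0 x hx, zero_mul]),
      ← Finset.sum_coe_sort S (fun x => Y x * κ x i)]
    exact Finset.sum_congr rfl fun s _ => by rw [hYS]
  have key2 : dotProduct y ((subA κ S').mulVec y)
      = dotProduct u ((subA κ S).mulVec u) := by
    simp only [dotProduct, Matrix.mulVec, hy]
    have inner_eq : ∀ a : Fin n, (∑ t : S', (κ a t * Y t)) = ∑ t : S, (κ a t * Y t) := by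
      intro a
      rw [Finset.sum_coe_sort S' (fun x => κ a x * Y x),
        ← Finset.sum_subset hSS (fun x _ hx => by rw [hY0 x hx, mul_zero]),
        ← Finset.sum_coe_sort S (fun x => κ a x * Y x)]
    calc ∑ t : S', Y t * ∑ t' : S', subA κ S' t t' * Y t'
        = ∑ t : S', Y t * ∑ t' : S', κ t t' * Y t' := rfl
      _ = ∑ x ∈ S', Y x * ∑ t' : S', κ x t' * Y t' := by
          rw [Finset.sum_coe_sort S' (fun x => Y x * ∑ t' : S', κ x t' * Y t')]
      _ = ∑ x ∈ S, Y x * ∑ t' : S', κ x t' * Y t' := by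
          rw [← Finset.sum_subset hSS (fun x _ hx => by rw [hY0 x hx, zero_mul])]
      _ = ∑ x ∈ S, Y x * ∑ t' : S, κ x t' * Y t' := by
          exact Finset.sum_congr rfl fun x _ => by rw [inner_eq x]
      _ = ∑ t : S, Y t * ∑ t' : S, κ t t' * Y t' := by
          rw [Finset.sum_coe_sort S (fun x => Y x * ∑ t' : S, κ x t' * Y t')]
      _ = ∑ t : S, u t * ∑ t' : S, subA κ S t t' * u t' := by
          refine Finset.sum_congr rfl fun t _ => ?_
          rw [hYS]
          congr 1
          exact Finset.sum_congr rfl fun t' _ => by rw [hYS]; rfl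
  have huAu : dotProduct u ((subA κ S).mulVec u) = dotProduct u v := by
    rw [hASu]
  have huv : dotProduct u v = dotProduct v u := dotProduct_comm _ _
  have := hub y
  rw [key1, key2, huAu] at this
  linarith [this, hqS]


/-- The Gaussian differential-entropy set function
H(S) = ½ ln((2πe)^{|S|} det κ(S,S)) is submodular for positive definite κ. -/
theorem gaussian_entropy_submodular (n : ℕ) (κ : Matrix (Fin n) (Fin n) ℝ)
    (hκ : κ.PosDef) (H : Finset (Fin n) → ℝ)
    (hH : ∀ S : Finset (Fin n), H S = (1 / 2) * Real.log
      ((2 * Real.pi * Real.exp 1) ^ S.card *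
        (κ.submatrix (fun a : S => (a : Fin n)) (fun a : S => (a : Fin n))).det))
    (S S' : Finset (Fin n)) (hSS : S ⊆ S') (i : Fin n) (hi : i ∉ S') :
    H (insert i S') - H S' ≤ H (insert i S) - H S := by
  classical
  have hiS : i ∉ S := fun h => hi (hSS h)
  set C : ℝ := 2 * Real.pi * Real.exp 1 with hCdef
  have hC : 0 < C := by
    have := Real.pi_pos
    have := Real.exp_pos 1
    positivity
  have hdet : ∀ T : Finset (Fin n), 0 < (subA κ T).det := fun T =>
    (posdef_submatrix_inj hκ _ Subtype.coe_injective).det_pos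
  have hr : ∀ T : Finset (Fin n), i ∉ T → 0 < κ i i - qf κ i T := by
    intro T hiT
    have h1 : 0 < (subA κ T).det * (κ i i - qf κ i T) := by
      rw [← det_insert κ hκ i T hiT]
      exact hdet _
    nlinarith [hdet T]
  have hHsub : ∀ T : Finset (Fin n), H T = (1 / 2) * Real.log (C ^ T.card * (subA κ T).det) :=
    fun T => hH T
  have hdiff : ∀ T : Finset (Fin n), i ∉ T →
      H (insert i T) - H T = (1 / 2) * Real.log (C * (κ i i - qf κ i T)) := by
    intro T hiT
    rw [hHsub, hHsub, Finset.card_insert_of_notMem hiT, det_insert κ hκ i T hiT]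
    have e1 : C ^ (T.card + 1) * ((subA κ T).det * (κ i i - qf κ i T))
        = (C ^ T.card * (subA κ T).det) * (C * (κ i i - qf κ i T)) := by ring
    rw [e1, Real.log_mul (mul_ne_zero (by positivity) (hdet T).ne') (mul_pos hC (hr T hiT)).ne', mul_add]
    ring
  rw [hdiff S hiS, hdiff S' hi]
  have hq : qf κ i S ≤ qf κ i S' := qf_mono κ hκ i S S' hSS
  have hle : C * (κ i i - qf κ i S') ≤ C * (κ i i - qf κ i S) := by
    apply mul_le_mul_of_nonneg_left (by linarith) hC.le
  have := Real.log_le_log (by nlinarith [hr S' hi]) hle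
  linarith
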